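/- arXiv:2301.12884 — 8 statements merged into one kernel-verified Lean document; each statement's English description precedes it below -/
import Mathlib

section
/- If 0 < m < u ≤ 1, then m/(u+m) < (1-m)/((1-m)+(1-u)), so the interval of probabilities p for which recourse is strictly optimal is nonempty. -/
/-- If `0 < m < u ≤ 1` then `m/(u+m) < (1-m)/((1-m)+(1-u))`, so the interval of
probabilities for which recourse is strictly optimal is nonempty. -/
theorem recourse_interval_nonempty (u m : ℝ) (hm : 0 < m) (hmu : m < u) (hu : u ≤ 1) :
    m / (u + m) < (1 - m) / ((1 - m) + (1 - u)) ∧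
      ∃ p : ℝ, m / (u + m) < p ∧ p < (1 - m) / ((1 - m) + (1 - u)) := by
  have h1 : (0:ℝ) < u + m := by linarith
  have h2 : (0:ℝ) < (1 - m) + (1 - u) := by linarith
  have key : m / (u + m) < (1 - m) / ((1 - m) + (1 - u)) := by
    rw [div_lt_div_iff₀ h1 h2]; nlinarith
  exact ⟨key, (m / (u + m) + (1 - m) / ((1 - m) + (1 - u))) / 2, by linarith, by linarith⟩
end

section
/- If 0 < u ≤ m < 1, then m/(u+m) ≥ (1-m)/((1-m)+(1-u)), so there is no probability p with m/(u+m) < p < (1-m)/((1-m)+(1-u)): the decision-maker never strictly prefers recourse to both accept and reject. -/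
/-- If `0 < u ≤ m < 1` then `m/(u+m) ≥ (1-m)/((1-m)+(1-u))`, so no probability `p`
lies strictly between the two thresholds: recourse is never strictly optimal. -/
theorem recourse_interval_empty (u m : ℝ) (hu : 0 < u) (hum : u ≤ m) (hm : m < 1) :
    m / (u + m) ≥ (1 - m) / ((1 - m) + (1 - u)) ∧
      ¬ ∃ p : ℝ, m / (u + m) < p ∧ p < (1 - m) / ((1 - m) + (1 - u)) := by
  have h1 : (0:ℝ) < u + m := by linarith
  have h2 : (0:ℝ) < (1 - m) + (1 - u) := by linarith
  have key : m / (u + m) ≥ (1 - m) / ((1 - m) + (1 - u)) := by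
    rw [ge_iff_le, div_le_div_iff₀ h2 h1]
    nlinarith
  exact ⟨key, fun ⟨p, h3, h4⟩ => absurd (h3.trans h4) (not_lt.mpr key)⟩
end

section
/- For fixed u ∈ (0,1), the length of the recourse interval, (1-m)/((1-m)+(1-u)) - m/(u+m), is strictly decreasing in m on (0, u). -/
/-- For fixed `u ∈ (0,1)`, the length of the recourse interval
`(1-m)/((1-m)+(1-u)) - m/(u+m)` is strictly decreasing in `m` on `(0, u)`. -/
theorem recourse_length_strictAntiOn_m (u : ℝ) (hu0 : 0 < u) (hu1 : u < 1) :
    StrictAntiOn (fun m : ℝ => (1 - m) / ((1 - m) + (1 - u)) - m / (u + m))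
      (Set.Ioo 0 u) := by
  intro a ha b hb hab
  obtain ⟨ha0, hau⟩ := ha
  obtain ⟨hb0, hbu⟩ := hb
  have hd1 : (0:ℝ) < (1 - a) + (1 - u) := by linarith
  have hd2 : (0:ℝ) < (1 - b) + (1 - u) := by linarith
  have hd3 : (0:ℝ) < u + a := by linarith
  have hd4 : (0:ℝ) < u + b := by linarith
  have h1 : (1 - b) / ((1 - b) + (1 - u)) < (1 - a) / ((1 - a) + (1 - u)) := by
    rw [div_lt_div_iff₀ hd2 hd1]
    nlinarith
  have h2 : a / (u + a) < b / (u + b) := by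
    rw [div_lt_div_iff₀ hd3 hd4]
    nlinarith
  simp only
  linarith
end

section
/- The length of the interval (1/2, (1-m)/((1-m)+(1-u))) of applicants who lose acceptance to recourse equals (u-m)/(2((1-m)+(1-u))), and this is strictly increasing in u and strictly decreasing in m for 0 < m < u < 1. -/
/-- The length of the interval `(1/2, (1-m)/((1-m)+(1-u)))` of applicants who lose
acceptance to recourse equals `(u-m)/(2((1-m)+(1-u)))`; it is strictly increasing in `u`
and strictly decreasing in `m` for `0 < m < u < 1`. -/
theorem accept_to_recourse_length :
    (∀ u m : ℝ, 0 < m → m < u → u < 1 →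
      (1 - m) / ((1 - m) + (1 - u)) - 1 / 2 = (u - m) / (2 * ((1 - m) + (1 - u)))) ∧
    (∀ m : ℝ, ∀ u₁ u₂ : ℝ, 0 < m → m < u₁ → u₁ < u₂ → u₂ < 1 →
      (u₁ - m) / (2 * ((1 - m) + (1 - u₁))) < (u₂ - m) / (2 * ((1 - m) + (1 - u₂)))) ∧
    (∀ u : ℝ, ∀ m₁ m₂ : ℝ, 0 < m₁ → m₁ < m₂ → m₂ < u → u < 1 →
      (u - m₂) / (2 * ((1 - m₂) + (1 - u))) < (u - m₁) / (2 * ((1 - m₁) + (1 - u)))) := by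
  refine ⟨?_, ?_, ?_⟩
  · intro u m hm hmu hu1
    have h : (0:ℝ) < (1 - m) + (1 - u) := by linarith
    field_simp
    ring
  · intro m u₁ u₂ hm h1 h2 h3
    have d1 : (0:ℝ) < 2 * ((1 - m) + (1 - u₁)) := by linarith
    have d2 : (0:ℝ) < 2 * ((1 - m) + (1 - u₂)) := by linarith
    rw [div_lt_div_iff₀ d1 d2]
    nlinarith [mul_pos (sub_pos.2 h2) (sub_pos.2 (show m < (1:ℝ) by linarith))]
  · intro u m₁ m₂ h1 h2 h3 h4
    have d1 : (0:ℝ) < 2 * ((1 - m₂) + (1 - u)) := by linarith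
    have d2 : (0:ℝ) < 2 * ((1 - m₁) + (1 - u)) := by linarith
    rw [div_lt_div_iff₀ d1 d2]
    nlinarith [mul_pos (sub_pos.2 h2) (sub_pos.2 h4)]
end

section
/- In the two-decision-maker game with u, m ∈ (0,1), if p < m/(u+m) (so p·u - (1-p)·m < 0) and p < 1/2, then (Reject, Reject) is the unique Nash equilibrium (in pure strategies) of the game. -/
/-- An action in the two-decision-maker game. -/
inductive RAction where
  | accept
  | recourse
  | reject
  deriving DecidableEq

/-- The applicant's preference rank over actions: Accept ≻ Recourse ≻ Reject. -/
def RAction.rank : RAction → ℕ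
  | .accept => 2
  | .recourse => 1
  | .reject => 0

/-- Solo payoff from serving the applicant with a given action. -/
noncomputable def soloPayoff (p u m : ℝ) : RAction → ℝ
  | .accept => p - (1 - p)
  | .recourse => p * u - (1 - p) * m
  | .reject => 0

/-- A player's payoff when she plays `a` and the opponent plays `b`: the applicant goes
to the player whose action he prefers (full solo payoff, the other gets 0); identical
actions split the solo payoff equally. -/
noncomputable def payoff (p u m : ℝ) (a b : RAction) : ℝ :=
  if a.rank > b.rank then soloPayoff p u m a
  else if a.rank = b.rank then soloPayoff p u m a / 2
  else 0

/-- `(a, b)` is a pure-strategy Nash equilibrium: neither player can strictly improve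
by unilateral deviation. -/
noncomputable def IsNash (p u m : ℝ) (a b : RAction) : Prop :=
  (∀ a' : RAction, payoff p u m a' b ≤ payoff p u m a b) ∧
  (∀ b' : RAction, payoff p u m b' a ≤ payoff p u m b a)
/-- If `p < m/(u+m)` (so the recourse payoff is negative) and `p < 1/2`, then
`(Reject, Reject)` is the unique pure-strategy Nash equilibrium. -/
theorem reject_reject_unique_nash (p u m : ℝ) (hp0 : 0 ≤ p) (hp1 : p ≤ 1)
    (hu0 : 0 < u) (hu1 : u < 1) (hm0 : 0 < m) (hm1 : m < 1)
    (hrec : p < m / (u + m)) (hp : p < 1 / 2) :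
    ∀ a b : RAction, IsNash p u m a b ↔ a = RAction.reject ∧ b = RAction.reject := by
  have hacc : p - (1 - p) < 0 := by linarith
  have hrec' : p * u - (1 - p) * m < 0 := by
    have hum : 0 < u + m := by linarith
    have h2 : p * (u + m) < m := (lt_div_iff₀ hum).mp hrec
    nlinarith
  intro a b
  constructor
  · rintro ⟨h1, h2⟩
    rcases a <;> rcases b <;>
      first
      | exact ⟨rfl, rfl⟩
      | (exfalso
         first
         | (have := h1 RAction.reject
            simp [payoff, soloPayoff, RAction.rank] at this; linarith)
         | (have := h2 RAction.reject
            simp [payoff, soloPayoff, RAction.rank] at this; linarith))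
  · rintro ⟨rfl, rfl⟩
    constructor <;> intro c <;> rcases c <;>
      simp [payoff, soloPayoff, RAction.rank] <;> linarith
end

section
/- In the two-decision-maker game, if m/(u+m) < p < 1/2 (so p·u - (1-p)·m > 0 and p - (1-p) < 0), then (Recourse, Recourse) is a Nash equilibrium in pure strategies. -/
/-- If `m/(u+m) < p < 1/2`, then `(Recourse, Recourse)` is a pure-strategy Nash
equilibrium. -/
theorem recourse_recourse_nash (p u m : ℝ) (hp0 : 0 ≤ p) (hp1 : p ≤ 1)
    (hu0 : 0 < u) (hu1 : u < 1) (hm0 : 0 < m) (hm1 : m < 1)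
    (hrec : m / (u + m) < p) (hp : p < 1 / 2) :
    IsNash p u m RAction.recourse RAction.recourse := by
  have hum : 0 < u + m := by linarith
  have hrecpos : 0 < p * u - (1 - p) * m := by
    have := (div_lt_iff₀ hum).mp hrec
    nlinarith
  have key : ∀ a' : RAction, payoff p u m a' RAction.recourse ≤
      payoff p u m RAction.recourse RAction.recourse := by
    intro a'
    cases a' <;>
      simp [payoff, RAction.rank, soloPayoff] <;> linarith
  exact ⟨key, key⟩
end

section
/- In the two-decision-maker game, if p > (1+(1-m))/(2+(1-m)+(1-u)) and p > 1/2, then Accept strictly dominates Recourse (given Reject is eliminated) and (Accept, Accept) is the unique pure Nash equilibrium obtained by iterated elimination of dominated strategies. -/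
/-- If `p > (1+(1-m))/(2+(1-m)+(1-u))` and `p > 1/2`, then Accept strictly dominates
Recourse once Reject is eliminated, and `(Accept, Accept)` is the unique pure-strategy
Nash equilibrium. -/
theorem accept_accept_unique_nash (p u m : ℝ) (hp0 : 0 ≤ p) (hp1 : p ≤ 1)
    (hu0 : 0 < u) (hu1 : u < 1) (hm0 : 0 < m) (hm1 : m < 1)
    (hthr : (1 + (1 - m)) / (2 + (1 - m) + (1 - u)) < p) (hp : 1 / 2 < p) :
    (∀ b : RAction, b ≠ RAction.reject →
      payoff p u m RAction.recourse b < payoff p u m RAction.accept b) ∧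
    (∀ a b : RAction, IsNash p u m a b ↔ a = RAction.accept ∧ b = RAction.accept) := by
  have hD : (0:ℝ) < 2 + (1 - m) + (1 - u) := by linarith
  have hthr' : 1 + (1 - m) < p * (2 + (1 - m) + (1 - u)) := by
    rwa [div_lt_iff₀ hD] at hthr
  have hA : 0 < 2 * p - 1 := by linarith
  have hR : p * u - (1 - p) * m < 2 * (2 * p - 1) := by nlinarith
  constructor
  · intro b hb
    cases b <;> simp_all [payoff, soloPayoff, RAction.rank] <;> linarith
  · intro a b
    constructor
    · rintro ⟨h1, h2⟩
      cases a <;> cases b <;>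
        first
        | exact ⟨rfl, rfl⟩
        | (exfalso
           first
           | (have := h1 RAction.accept
              simp only [payoff, soloPayoff, RAction.rank] at this
              norm_num at this <;> linarith)
           | (have := h2 RAction.accept
              simp only [payoff, soloPayoff, RAction.rank] at this
              norm_num at this <;> linarith))
    · rintro ⟨rfl, rfl⟩
      constructor <;> intro x <;> cases x <;>
        simp [payoff, soloPayoff, RAction.rank] <;> linarith
end

section
/- For all u, m ∈ [0,1) , (1+(1-m))/(2+(1-m)+(1-u)) ≤ (1-m)/((1-m)+(1-u)) if and only if (1-m)/((1-m)+(1-u)) ≥ 1/2, i.e., when u ≥ m; in particular when m ≤ u the competition acceptance threshold max{(1+(1-m))/(2+(1-m)+(1-u)), 1/2} is less than or equal to the no-competition acceptance threshold max{(1-m)/((1-m)+(1-u)), 1/2}. -/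
/-- For `u, m ∈ [0,1)`, the competition acceptance threshold is below the no-competition
threshold exactly when the latter is at least `1/2`, i.e. when `u ≥ m`; in particular,
for `m ≤ u` the max-with-`1/2` competition threshold is at most the no-competition one. -/
theorem competition_threshold_le (u m : ℝ) (hu0 : 0 ≤ u) (hu1 : u < 1)
    (hm0 : 0 ≤ m) (hm1 : m < 1) :
    ((1 + (1 - m)) / (2 + (1 - m) + (1 - u)) ≤ (1 - m) / ((1 - m) + (1 - u)) ↔
        (1 - m) / ((1 - m) + (1 - u)) ≥ 1 / 2) ∧
      ((1 - m) / ((1 - m) + (1 - u)) ≥ 1 / 2 ↔ u ≥ m) ∧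
      (m ≤ u →
        max ((1 + (1 - m)) / (2 + (1 - m) + (1 - u))) (1 / 2) ≤
          max ((1 - m) / ((1 - m) + (1 - u))) (1 / 2)) := by
  have hd1 : (0:ℝ) < 2 + (1 - m) + (1 - u) := by linarith
  have hd2 : (0:ℝ) < (1 - m) + (1 - u) := by linarith
  have h1 : (1 + (1 - m)) / (2 + (1 - m) + (1 - u)) ≤ (1 - m) / ((1 - m) + (1 - u)) ↔
      u ≥ m := by
    rw [div_le_div_iff₀ hd1 hd2]
    constructor <;> intro h <;> nlinarith
  have h2 : (1 - m) / ((1 - m) + (1 - u)) ≥ 1 / 2 ↔ u ≥ m := by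
    rw [ge_iff_le, div_le_div_iff₀ (by norm_num) hd2]
    constructor <;> intro h <;> nlinarith
  refine ⟨h1.trans h2.symm, h2, fun hmu => ?_⟩
  exact max_le_max (h1.mpr hmu) le_rfl
end
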